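/- Let G be a connected real Lie group with Lie algebra g. Then there exists an open dense set U ⊆ g such that for every v ∈ U, the closure of the adjoint orbit Ad_G(v) does not contain 0. -/

import Mathlib

open scoped Topology
open Polynomial Filter

/-- Evaluation of a multivariate polynomial is continuous in the point. -/
private lemma mvpoly_eval_continuous {ι : Type*} [Fintype ι] (P : MvPolynomial ι ℝ) :
    Continuous fun c : ι → ℝ => MvPolynomial.eval c P := by
  induction P using MvPolynomial.induction_on with
  | C a => simpa using continuous_const
  | add p q hp hq => simp only [map_add]; exact hp.add hq
  | mul_X p i hp =>
      simp only [map_mul, MvPolynomial.eval_X]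
      exact hp.mul (continuous_apply i)

theorem exists_open_dense_adjoint_orbits_away_from_zero
    {g : Type*} [LieRing g] [LieAlgebra ℝ g] [FiniteDimensional ℝ g] [Nontrivial g]
    [TopologicalSpace g] [IsTopologicalAddGroup g] [ContinuousSMul ℝ g] [T2Space g]
    {G : Type*} [Group G]
    (Ad : G →* Module.End ℝ g) (exp : g → G)
    (hexp0 : exp 0 = 1)
    (hgen : Subgroup.closure (Set.range exp) = ⊤)
    (hbracket : ∀ (a : G) (x y : g), Ad a ⁅x, y⁆ = ⁅Ad a x, Ad a y⁆)
    (hderiv : ∀ (x v : g) (t : ℝ),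
      Filter.Tendsto
        (fun s : ℝ => (s - t)⁻¹ • (Ad (exp (s • x)) v - Ad (exp (t • x)) v))
        (𝓝[≠] t) (𝓝 (Ad (exp (t • x)) ⁅x, v⁆))) :
    ∃ U : Set g, IsOpen U ∧ Dense U ∧
      ∀ v ∈ U, (0 : g) ∉ closure {w : g | ∃ a : G, Ad a v = w} := by
  classical
  by_cases hnilp : ∀ x : g, IsNilpotent (LieAlgebra.ad ℝ g x)
  · -- Case B : every `ad x` nilpotent; by Engel `g` is nilpotent, hence solvable,
    -- hence the derived ideal is a proper subspace, and orbits live in cosets of it.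
    haveI : LieRing.IsNilpotent g := (LieAlgebra.isNilpotent_iff_forall).mpr hnilp
    set I : LieIdeal ℝ g := LieAlgebra.derivedSeries ℝ g 1 with hI
    set D : Submodule ℝ g := (I : Submodule ℝ g) with hD
    have hIlt : I < ⊤ := LieAlgebra.derivedSeries_lt_top_of_solvable ℝ g
    have hDne : D ≠ ⊤ := by
      intro h
      apply hIlt.ne
      ext z
      simp only [LieSubmodule.mem_top]
      have : z ∈ D := h ▸ Submodule.mem_top
      exact ⟨fun _ => trivial, fun _ => this⟩
    have hDclosed : IsClosed (D : Set g) := D.closed_of_finiteDimensional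
    -- membership of brackets
    have hI1 : I = ⁅(⊤ : LieIdeal ℝ g), (⊤ : LieIdeal ℝ g)⁆ := by
      rw [hI]
      rfl
    have hbr : ∀ x v : g, ⁅x, v⁆ ∈ D := by
      intro x v
      have : ⁅x, v⁆ ∈ I := by
        rw [hI1]
        exact LieSubmodule.lie_mem_lie (LieSubmodule.mem_top x) (LieSubmodule.mem_top v)
      exact this
    -- `Ad a` preserves `D`
    have hAdD : ∀ (a : G) (u : g), u ∈ D → Ad a u ∈ D := by
      intro a u hu
      have hspan : D = Submodule.span ℝ
          {m : g | ∃ (x : (⊤ : LieIdeal ℝ g)) (n : (⊤ : LieIdeal ℝ g)), ⁅(x : g), (n : g)⁆ = m} := by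
        rw [hD, hI1]
        exact LieSubmodule.lieIdeal_oper_eq_linear_span _ _
      rw [hspan] at hu ⊢
      induction hu using Submodule.span_induction with
      | mem z hz =>
          obtain ⟨x, n, rfl⟩ := hz
          apply Submodule.subset_span
          refine ⟨⟨Ad a x, trivial⟩, ⟨Ad a n, trivial⟩, ?_⟩
          exact (hbracket a x n).symm
      | zero => simp
      | add y z _ _ hy hz => simpa using Submodule.add_mem _ hy hz
      | smul c y _ hy => simpa using Submodule.smul_mem _ c hy
    -- the key invariance: orbits stay in cosets of D
    have key : ∀ (a : G) (v : g), Ad a v - v ∈ D := by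
      let S : Subgroup G :=
        { carrier := {a : G | ∀ v : g, Ad a v - v ∈ D}
          one_mem' := by intro v; simp
          mul_mem' := by
            intro a b ha hb v
            have : Ad (a * b) v - v = (Ad a (Ad b v) - Ad b v) + (Ad b v - v) := by
              simp only [map_mul, Module.End.mul_apply]
              abel
            rw [this]
            exact Submodule.add_mem _ (ha _) (hb _)
          inv_mem' := by
            intro a ha v
            have h1 : Ad a (Ad a⁻¹ v) = v := by
              rw [← Module.End.mul_apply, ← map_mul, mul_inv_cancel, map_one,
                Module.End.one_apply]
            have : Ad a⁻¹ v - v = -(Ad a (Ad a⁻¹ v) - Ad a⁻¹ v) := by rw [h1]; abel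
            rw [this]
            exact Submodule.neg_mem _ (ha _) }
      have hexpS : Set.range exp ⊆ S := by
        rintro _ ⟨x, rfl⟩
        intro v
        set c : ℝ → g := fun s => Ad (exp (s • x)) v with hc
        -- for every dual functional vanishing on D, `λ ∘ c` is constant
        have hquot : ∀ ψ : Module.Dual ℝ (g ⧸ D), ψ (D.mkQ (c 1)) = ψ (D.mkQ (c 0)) := by
          intro ψ
          set lam : g →ₗ[ℝ] ℝ := ψ.comp D.mkQ with hlam
          have hlamcont : Continuous lam := lam.continuous_of_finiteDimensional
          have hlamD : ∀ u ∈ D, lam u = 0 := by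
            intro u hu
            have : D.mkQ u = 0 := by
              rw [Submodule.mkQ_apply]
              exact (Submodule.Quotient.mk_eq_zero D).mpr hu
            simp [hlam, this]
          have hd : ∀ t : ℝ, HasDerivAt (fun s => lam (c s)) 0 t := by
            intro t
            have h1 := hderiv x v t
            have h2 : Filter.Tendsto (fun s : ℝ => lam ((s - t)⁻¹ • (c s - c t)))
                (𝓝[≠] t) (𝓝 (lam (Ad (exp (t • x)) ⁅x, v⁆))) :=
              (hlamcont.tendsto _).comp h1
            have h3 : lam (Ad (exp (t • x)) ⁅x, v⁆) = 0 :=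
              hlamD _ (hAdD _ _ (hbr x v))
            rw [hasDerivAt_iff_tendsto_slope]
            have h4 : (fun s : ℝ => lam ((s - t)⁻¹ • (c s - c t)))
                = slope (fun s => lam (c s)) t := by
              funext s
              rw [slope_def_field, map_smul, map_sub, smul_eq_mul, div_eq_inv_mul]
            rw [h4, h3] at h2
            exact h2
          have hdiff : Differentiable ℝ fun s => lam (c s) :=
            fun t => (hd t).differentiableAt
          have := is_const_of_deriv_eq_zero hdiff (fun t => (hd t).deriv) 1 0
          simpa [hlam] using this
        have hmk : D.mkQ (c 1 - c 0) = 0 := by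
          rw [map_sub]
          apply (Module.forall_dual_apply_eq_zero_iff ℝ (D.mkQ (c 1) - D.mkQ (c 0))).mp
          intro ψ
          rw [map_sub, hquot ψ, sub_self]
        have hmem : c 1 - c 0 ∈ D := by
          rw [Submodule.mkQ_apply] at hmk
          exact (Submodule.Quotient.mk_eq_zero D).mp hmk
        have hc1 : c 1 = Ad (exp x) v := by rw [hc]; simp
        have hc0 : c 0 = v := by
          rw [hc]; simp only [zero_smul, hexp0, map_one, Module.End.one_apply]
        rwa [hc1, hc0] at hmem
      have hS : S = ⊤ := top_unique (hgen ▸ Subgroup.closure_le S |>.mpr hexpS)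
      intro a v
      have : a ∈ S := hS ▸ Subgroup.mem_top a
      exact this v
    -- assemble
    refine ⟨(D : Set g)ᶜ, hDclosed.isOpen_compl, ?_, ?_⟩
    · rw [← interior_eq_empty_iff_dense_compl]
      by_contra h
      exact hDne (D.eq_top_of_nonempty_interior' (Set.nonempty_iff_ne_empty.mpr h))
    · intro v hv h0
      have hC : IsClosed {w : g | w - v ∈ D} :=
        hDclosed.preimage (continuous_id.sub continuous_const)
      have hsub : {w : g | ∃ a : G, Ad a v = w} ⊆ {w : g | w - v ∈ D} := by
        rintro _ ⟨a, rfl⟩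
        exact key a v
      have := closure_minimal hsub hC h0
      have hvD : v ∈ D := by
        have : (0 : g) - v ∈ D := this
        rw [zero_sub] at this
        simpa using Submodule.neg_mem _ this
      exact hv hvD
  · -- Case A : some `ad x` is not nilpotent; a coefficient of the characteristic
    -- polynomial gives a continuous, Ad-invariant polynomial invariant vanishing at 0.
    push_neg at hnilp
    obtain ⟨x, hx⟩ := hnilp
    set n : ℕ := Module.finrank ℝ g with hn
    have hxc : (LieAlgebra.ad ℝ g x).charpoly ≠ X ^ n := by
      intro h
      exact hx ((LinearMap.isNilpotent_iff_charpoly _).mpr h)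
    obtain ⟨j, hj⟩ : ∃ j, ((LieAlgebra.ad ℝ g x).charpoly).coeff j ≠ (X ^ n : ℝ[X]).coeff j := by
      by_contra h
      push_neg at h
      exact hxc (Polynomial.ext h)
    have hjn : j ≠ n := by
      intro h
      apply hj
      rw [h, Polynomial.coeff_X_pow, if_pos rfl]
      have hmonic : ((LieAlgebra.ad ℝ g x).charpoly).Monic := LinearMap.charpoly_monic _
      have hdeg : ((LieAlgebra.ad ℝ g x).charpoly).natDegree = n :=
        LinearMap.charpoly_natDegree _
      rw [← hdeg]
      exact hmonic.coeff_natDegree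
    have hXpj : (X ^ n : ℝ[X]).coeff j = 0 := by
      rw [Polynomial.coeff_X_pow, if_neg hjn]
    set f : g → ℝ := fun v => ((LieAlgebra.ad ℝ g v).charpoly).coeff j with hf
    have hfx : f x ≠ 0 := by rw [hf]; rw [hXpj] at hj; exact hj
    have hf0 : f 0 = 0 := by
      have had0 : LieAlgebra.ad ℝ g (0 : g) = 0 := map_zero _
      have h0nil : IsNilpotent (0 : Module.End ℝ g) := ⟨1, pow_one _⟩
      rw [hf]
      simp only [had0]
      rw [(LinearMap.isNilpotent_iff_charpoly _).mp h0nil, hXpj]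
    -- invariance under the adjoint action
    have hinv : ∀ (a : G) (v : g), f (Ad a v) = f v := by
      intro a v
      have h1 : ∀ w, Ad a (Ad a⁻¹ w) = w := by
        intro w
        rw [← Module.End.mul_apply, ← map_mul, mul_inv_cancel, map_one, Module.End.one_apply]
      have h2 : ∀ w, Ad a⁻¹ (Ad a w) = w := by
        intro w
        rw [← Module.End.mul_apply, ← map_mul, inv_mul_cancel, map_one, Module.End.one_apply]
      have hconj : LieAlgebra.ad ℝ g (Ad a v) =
          (LinearEquiv.ofLinear (Ad a) (Ad a⁻¹) (LinearMap.ext h1) (LinearMap.ext h2)).conj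
            (LieAlgebra.ad ℝ g v) := by
        apply LinearMap.ext
        intro w
        simp only [LinearEquiv.conj_apply, LinearMap.coe_comp, Function.comp_apply,
          LinearEquiv.coe_coe, LinearEquiv.ofLinear_apply, LinearEquiv.ofLinear_symm_apply,
          LieAlgebra.ad_apply]
        rw [hbracket a v (Ad a⁻¹ w), h1]
      rw [hf]
      simp only [hconj, LinearEquiv.charpoly_conj]
    -- continuity via polyCharpoly
    set b : Module.Basis (Fin n) ℝ g := Module.finBasis ℝ g with hb
    set φ : g →ₗ[ℝ] Module.End ℝ g := (LieAlgebra.ad ℝ g : g →ₗ[ℝ] Module.End ℝ g) with hφ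
    set P : MvPolynomial (Fin n) ℝ := (φ.polyCharpoly b).coeff j with hP
    have hfeq : ∀ v : g, f v = MvPolynomial.eval (b.repr v) P := by
      intro v
      rw [hP, LinearMap.polyCharpoly_coeff_eval φ b v j]
      rfl
    have hcont : Continuous f := by
      have h1 : Continuous fun v : g => (fun i => b.repr v i : Fin n → ℝ) :=
        continuous_pi fun i => (b.coord i).continuous_of_finiteDimensional
      have h2 := (mvpoly_eval_continuous P).comp h1
      have : f = (fun c : Fin n → ℝ => MvPolynomial.eval c P) ∘
          (fun v : g => (fun i => b.repr v i)) := by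
        funext v
        exact hfeq v
      rw [this]
      exact h2
    refine ⟨{v : g | f v ≠ 0}, ?_, ?_, ?_⟩
    · exact isOpen_compl_singleton.preimage hcont
    · -- density via the one-variable polynomial along lines
      rw [dense_iff_inter_open]
      rintro V hV ⟨v₀, hv₀⟩
      by_contra hVe
      rw [Set.not_nonempty_iff_eq_empty] at hVe
      have hVzero : ∀ w ∈ V, f w = 0 := by
        intro w hw
        by_contra hfw
        have hne : (V ∩ {v : g | f v ≠ 0}).Nonempty := ⟨w, hw, hfw⟩
        rw [hVe] at hne
        exact Set.not_nonempty_empty hne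
      -- polynomial along the line from v₀ to x
      set Q : ℝ[X] := MvPolynomial.aeval
        (fun i => Polynomial.C (b.repr v₀ i) + Polynomial.X * Polynomial.C (b.repr (x - v₀) i)) P
        with hQ
      have hQeval : ∀ t : ℝ, Q.eval t = f (v₀ + t • (x - v₀)) := by
        intro t
        have h1 : Q.eval t = (Polynomial.evalRingHom t)
            (MvPolynomial.eval₂ (algebraMap ℝ ℝ[X])
              (fun i => Polynomial.C (b.repr v₀ i) + Polynomial.X * Polynomial.C (b.repr (x - v₀) i)) P) := by
          rw [hQ, MvPolynomial.aeval_def]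
          rfl
        rw [h1, MvPolynomial.eval₂_comp_left]
        have h2 : (Polynomial.evalRingHom t).comp (algebraMap ℝ ℝ[X]) = RingHom.id ℝ := by
          ext r
          simp
        rw [h2]
        have h3 : ((Polynomial.evalRingHom t) ∘
            (fun i => Polynomial.C (b.repr v₀ i) + Polynomial.X * Polynomial.C (b.repr (x - v₀) i)))
            = fun i => (b.repr (v₀ + t • (x - v₀))) i := by
          funext i
          simp only [Function.comp_apply, coe_evalRingHom, eval_add, eval_C, eval_mul, eval_X,
            map_add, map_smul, Finsupp.coe_add, Finsupp.coe_smul, Pi.add_apply, Pi.smul_apply,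
            smul_eq_mul]
        rw [h3, hfeq]
        rfl
      -- Q vanishes on a nontrivial interval
      have hmapcont : Continuous fun t : ℝ => v₀ + t • (x - v₀) :=
        continuous_const.add (continuous_id.smul continuous_const)
      have hWopen : IsOpen ((fun t : ℝ => v₀ + t • (x - v₀)) ⁻¹' V) := hV.preimage hmapcont
      have hW0 : (0 : ℝ) ∈ (fun t : ℝ => v₀ + t • (x - v₀)) ⁻¹' V := by
        simp [hv₀]
      obtain ⟨p, q, hpq, hIoo⟩ := hWopen.exists_Ioo_subset ⟨0, hW0⟩
      have hQ0 : Q = 0 := by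
        apply Polynomial.eq_zero_of_infinite_isRoot
        apply Set.Infinite.mono (s := Set.Ioo p q)
        · intro t ht
          have := hVzero _ (hIoo ht)
          show Q.IsRoot t
          rw [Polynomial.IsRoot, hQeval t, this]
        · exact Set.Ioo_infinite hpq
      have : f x = 0 := by
        have := hQeval 1
        rw [hQ0] at this
        simpa using this.symm
      exact hfx this
    · intro v hv h0
      have hC : IsClosed {w : g | f w = f v} :=
        (isClosed_singleton.preimage hcont : IsClosed (f ⁻¹' {f v}))
      have hsub : {w : g | ∃ a : G, Ad a v = w} ⊆ {w : g | f w = f v} := by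
        rintro _ ⟨a, rfl⟩
        exact hinv a v
      have h := closure_minimal hsub hC h0
      rw [Set.mem_setOf_eq, hf0] at h
      exact hv h.symm
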